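/- Let Z be a discrete real random variable with CDF F_Z and probability mass function p_Z, and let U ~ Uniform[0,1] be independent of Z. Then S := F_Z(Z⁻) + U · p_Z(Z), where F_Z(z⁻) denotes the left limit of F_Z at z, is uniformly distributed on [0,1]. -/

import Mathlib

open MeasureTheory ProbabilityTheory

lemma vol_Ico_inter_Icc (a c u : ℝ) (ha : 0 ≤ a) (hc : 0 ≤ c) :
    volume (Set.Ico a (a + c) ∩ Set.Icc 0 u) = ENNReal.ofReal (min (u - a) c) := by
  rcases lt_or_ge u a with h | h
  · have he : Set.Ico a (a + c) ∩ Set.Icc 0 u = ∅ := by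
      ext x
      simp only [Set.mem_inter_iff, Set.mem_Ico, Set.mem_Icc, Set.mem_empty_iff_false,
        iff_false, not_and]
      rintro ⟨h1, h2⟩ h3
      linarith
    rw [he, measure_empty]
    symm
    rw [ENNReal.ofReal_eq_zero]
    exact min_le_of_left_le (by linarith)
  · rcases lt_or_ge u (a + c) with h2 | h2
    · have he : Set.Ico a (a + c) ∩ Set.Icc 0 u = Set.Icc a u := by
        ext x
        simp only [Set.mem_inter_iff, Set.mem_Ico, Set.mem_Icc]
        constructor
        · rintro ⟨⟨h1, _⟩, _, h4⟩; exact ⟨h1, h4⟩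
        · rintro ⟨h1, h4⟩; exact ⟨⟨h1, by linarith⟩, by linarith, h4⟩
      rw [he, Real.volume_Icc]
      congr 1
      rw [min_eq_left (by linarith)]
    · have he : Set.Ico a (a + c) ∩ Set.Icc 0 u = Set.Ico a (a + c) := by
        apply Set.inter_eq_left.mpr
        rintro x ⟨h1, h3⟩
        exact ⟨by linarith, by linarith⟩
      rw [he, Real.volume_Ico]
      rw [min_eq_right (by linarith)]
      congr 1
      ring

/-- Randomized probability integral transform for a discrete random variable:
`S = F_Z(Z⁻) + U·p_Z(Z)` is uniform on `[0,1]` when `U ~ Uniform[0,1]` is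
independent of `Z`. -/
theorem randomized_probability_integral_transform
    {Ω : Type*} [MeasurableSpace Ω] (μ : Measure Ω) [IsProbabilityMeasure μ]
    (Z U : Ω → ℝ) (hZ : Measurable Z) (hU : Measurable U)
    (hdiscrete : (Set.range Z).Countable)
    (hindep : IndepFun Z U μ)
    (hUuniform : ∀ u ∈ Set.Icc (0:ℝ) 1, μ {ω | U ω ≤ u} = ENNReal.ofReal u)
    (Fm p : ℝ → ℝ)
    (hFm : ∀ z, Fm z = (μ {ω | Z ω < z}).toReal)
    (hp : ∀ z, p z = (μ {ω | Z ω = z}).toReal) :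
    ∀ u ∈ Set.Icc (0:ℝ) 1,
      μ {ω | Fm (Z ω) + U ω * p (Z ω) ≤ u} = ENNReal.ofReal u := by
  intro u hu
  obtain ⟨hu0, hu1⟩ := hu
  set R := Set.range Z with hRdef
  have hZz : ∀ z : ℝ, MeasurableSet {ω | Z ω = z} := fun z => hZ (measurableSet_singleton z)
  have hple : ∀ z, ENNReal.ofReal (p z) = μ {ω | Z ω = z} := by
    intro z; rw [hp z]; exact ENNReal.ofReal_toReal (measure_ne_top μ _)
  have hp0 : ∀ z, 0 ≤ p z := fun z => (hp z) ▸ ENNReal.toReal_nonneg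
  have hF0 : ∀ z, 0 ≤ Fm z := fun z => (hFm z) ▸ ENNReal.toReal_nonneg
  have hFadd : ∀ z, Fm z + p z = (μ {ω | Z ω ≤ z}).toReal := by
    intro z
    have hdis : Disjoint {ω | Z ω < z} {ω | Z ω = z} := by
      rw [Set.disjoint_left]
      intro ω h1 h2
      exact absurd h2 (ne_of_lt h1)
    have hsplit : {ω | Z ω ≤ z} = {ω | Z ω < z} ∪ {ω | Z ω = z} := by
      ext ω; simp [le_iff_lt_or_eq]
    rw [hFm, hp, hsplit, measure_union hdis (hZz z),
      ENNReal.toReal_add (measure_ne_top μ _) (measure_ne_top μ _)]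
  have hmono : ∀ z z' : ℝ, z < z' → Fm z + p z ≤ Fm z' := by
    intro z z' hzz
    rw [hFadd z, hFm z']
    exact ENNReal.toReal_mono (measure_ne_top μ _)
      (measure_mono (fun ω h => lt_of_le_of_lt h hzz))
  have hFp1 : ∀ z, Fm z + p z ≤ 1 := by
    intro z
    rw [hFadd]
    calc (μ {ω | Z ω ≤ z}).toReal ≤ (μ Set.univ).toReal :=
          ENNReal.toReal_mono (measure_ne_top μ _) (measure_mono (Set.subset_univ _))
      _ = 1 := by simp
  have hUle : ∀ t : ℝ, μ {ω | U ω ≤ t} = ENNReal.ofReal (min t 1) := by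
    intro t
    rcases le_or_gt t 0 with h | h
    · have h0 := hUuniform 0 ⟨le_refl 0, zero_le_one⟩
      have hle : μ {ω | U ω ≤ t} ≤ μ {ω | U ω ≤ (0:ℝ)} :=
        measure_mono (fun ω hω => le_trans hω h)
      rw [h0, ENNReal.ofReal_zero] at hle
      have hz : μ {ω | U ω ≤ t} = 0 := le_antisymm hle bot_le
      rw [hz]
      symm
      rw [ENNReal.ofReal_eq_zero]
      exact min_le_of_left_le h
    · rcases le_or_gt t 1 with h1 | h1
      · rw [min_eq_left h1]; exact hUuniform t ⟨h.le, h1⟩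
      · rw [min_eq_right h1.le]
        have hle : μ {ω | U ω ≤ (1:ℝ)} ≤ μ {ω | U ω ≤ t} :=
          measure_mono (fun ω hω => le_trans hω h1.le)
        rw [hUuniform 1 ⟨zero_le_one, le_refl 1⟩, ENNReal.ofReal_one] at hle
        rw [ENNReal.ofReal_one]
        exact le_antisymm prob_le_one hle
  -- per-z computation
  have hg : ∀ z : ℝ, μ ({ω | Z ω = z} ∩ {ω | Fm z + U ω * p z ≤ u})
      = ENNReal.ofReal (min (u - Fm z) (p z)) := by
    intro z
    rcases eq_or_lt_of_le (hp0 z) with hpz | hpz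
    · have hμz : μ {ω | Z ω = z} = 0 := by rw [← hple z, ← hpz]; simp
      have hz0 : μ ({ω | Z ω = z} ∩ {ω | Fm z + U ω * p z ≤ u}) = 0 :=
        le_antisymm ((measure_mono Set.inter_subset_left).trans_eq hμz) bot_le
      rw [hz0]
      symm
      rw [ENNReal.ofReal_eq_zero]
      exact min_le_of_right_le (le_of_eq hpz.symm)
    · set t := (u - Fm z) / p z with ht
      have hset : {ω | Fm z + U ω * p z ≤ u} = U ⁻¹' (Set.Iic t) := by
        ext ω
        simp only [Set.mem_setOf_eq, Set.mem_preimage, Set.mem_Iic, ht]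
        rw [le_div_iff₀ hpz]
        constructor <;> intro h <;> linarith
      have hsetZ : {ω | Z ω = z} = Z ⁻¹' {z} := rfl
      rw [hset, hsetZ,
        hindep.measure_inter_preimage_eq_mul _ _ (measurableSet_singleton z) measurableSet_Iic]
      have hpre : μ (U ⁻¹' (Set.Iic t)) = ENNReal.ofReal (min t 1) := hUle t
      have hple' : μ (Z ⁻¹' {z}) = ENNReal.ofReal (p z) := (hple z).symm
      rw [hpre, hple', ← ENNReal.ofReal_mul (hp0 z)]
      congr 1
      have hcancel : p z * t = u - Fm z := by
        rw [ht]; field_simp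
      rw [mul_min_of_nonneg _ _ (hp0 z), hcancel, mul_one]
  -- decomposition of the event
  have hEdecomp : {ω | Fm (Z ω) + U ω * p (Z ω) ≤ u}
      = ⋃ z ∈ R, ({ω | Z ω = z} ∩ {ω | Fm z + U ω * p z ≤ u}) := by
    ext ω
    simp only [Set.mem_setOf_eq, Set.mem_iUnion, Set.mem_inter_iff, exists_prop]
    constructor
    · intro h; exact ⟨Z ω, ⟨ω, rfl⟩, rfl, h⟩
    · rintro ⟨z, _, hz, h⟩; rw [hz]; exact h
  have hmeasU : ∀ z : ℝ, MeasurableSet {ω | Fm z + U ω * p z ≤ u} := by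
    intro z
    exact ((hU.mul_const _).const_add _) measurableSet_Iic
  have hgdisj : R.PairwiseDisjoint
      (fun z => {ω | Z ω = z} ∩ {ω | Fm z + U ω * p z ≤ u}) := by
    intro z _ z' _ hzz
    apply Set.disjoint_left.mpr
    rintro ω ⟨h1, _⟩ ⟨h2, _⟩
    exact hzz (h1.symm.trans h2)
  have hIdisj : R.PairwiseDisjoint (fun z => Set.Ico (Fm z) (Fm z + p z)) := by
    intro z hz z' hz' hzz
    rcases hzz.lt_or_gt with h | h
    · have hle := hmono z z' h
      apply Set.disjoint_left.mpr
      rintro x ⟨h1, h2⟩ ⟨h3, h4⟩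
      linarith
    · have hle := hmono z' z h
      apply Set.disjoint_left.mpr
      rintro x ⟨h1, h2⟩ ⟨h3, h4⟩
      linarith
  have hIdisj' : R.PairwiseDisjoint
      (fun z => Set.Ico (Fm z) (Fm z + p z) ∩ Set.Icc 0 u) :=
    fun z hz z' hz' hne =>
      ((hIdisj hz hz' hne).mono Set.inter_subset_left Set.inter_subset_left)
  set A := ⋃ z ∈ R, Set.Ico (Fm z) (Fm z + p z) with hAdef
  have hAmeas : MeasurableSet A :=
    MeasurableSet.biUnion hdiscrete (fun z _ => measurableSet_Ico)
  have hZdisj : R.PairwiseDisjoint (fun z => {ω | Z ω = z}) := by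
    intro z _ z' _ hzz
    apply Set.disjoint_left.mpr
    intro ω h1 h2
    exact hzz (h1.symm.trans h2)
  have hA : volume A = 1 := by
    rw [hAdef, measure_biUnion hdiscrete hIdisj (fun z _ => measurableSet_Ico)]
    have hterm : ∀ z : R, volume (Set.Ico (Fm z) (Fm z + p z)) = μ {ω | Z ω = (z:ℝ)} := by
      intro z; rw [Real.volume_Ico, add_sub_cancel_left, hple]
    rw [tsum_congr hterm, ← measure_biUnion hdiscrete hZdisj (fun z _ => hZz z)]
    have huniv : (⋃ z ∈ R, {ω | Z ω = z}) = Set.univ := by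
      ext ω
      simp only [Set.mem_iUnion, Set.mem_setOf_eq, Set.mem_univ, iff_true, exists_prop]
      exact ⟨Z ω, ⟨ω, rfl⟩, rfl⟩
    rw [huniv, measure_univ]
  have hsub : A ⊆ Set.Icc (0:ℝ) 1 := by
    intro x hx
    simp only [hAdef, Set.mem_iUnion, exists_prop] at hx
    obtain ⟨z, _, h1, h2⟩ := hx
    exact ⟨le_trans (hF0 z) h1, le_of_lt (lt_of_lt_of_le h2 (hFp1 z))⟩
  have hdiffnull : volume (Set.Icc (0:ℝ) 1 \ A) = 0 := by
    rw [measure_diff hsub hAmeas.nullMeasurableSet (by rw [hA]; exact ENNReal.one_ne_top)]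
    rw [hA, Real.volume_Icc]
    simp
  have hnull2 : volume (Set.Icc 0 u \ A) = 0 := by
    refine measure_mono_null ?_ hdiffnull
    intro x hx
    simp only [Set.mem_diff, Set.mem_Icc] at hx ⊢
    exact ⟨⟨hx.1.1, hx.1.2.trans hu1⟩, hx.2⟩
  have hfinal : volume (A ∩ Set.Icc 0 u) = ENNReal.ofReal u := by
    have hiad := measure_inter_add_diff (μ := volume) (Set.Icc (0:ℝ) u) hAmeas
    rw [hnull2, add_zero, Real.volume_Icc, sub_zero] at hiad
    rw [Set.inter_comm]
    exact hiad
  rw [hEdecomp, measure_biUnion hdiscrete hgdisj (fun z _ => (hZz z).inter (hmeasU z))]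
  have h1 : ∀ z : R, μ ({ω | Z ω = (z:ℝ)} ∩ {ω | Fm z + U ω * p z ≤ u})
      = volume (Set.Ico (Fm z) (Fm z + p z) ∩ Set.Icc 0 u) := by
    intro z
    rw [hg, vol_Ico_inter_Icc _ _ _ (hF0 z) (hp0 z)]
  rw [tsum_congr h1,
    ← measure_biUnion hdiscrete hIdisj' (fun z _ => measurableSet_Ico.inter measurableSet_Icc)]
  have hun : (⋃ z ∈ R, (Set.Ico (Fm z) (Fm z + p z) ∩ Set.Icc 0 u)) = A ∩ Set.Icc 0 u := by
    rw [hAdef]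
    simp only [← Set.iUnion_inter]
  rw [hun]
  exact hfinal
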